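/- arXiv:2002.01589 — 6 statements merged into one kernel-verified Lean document; each statement's English description precedes it below -/
import Mathlib

section
/- Let (A, d, ∧) be a cdga over a field k of characteristic 0, m ≥ 1, and let η₁, η₂ ∈ A¹ ∩ ker d with η₁ − η₂ = da for some a ∈ A⁰. Then wedge multiplication by exp(a ⊗ s) = Σ_{n=0}^{m−1} (1/n!) aⁿ ⊗ sⁿ defines an isomorphism of cochain complexes A(η₁, m) → A(η₂, m), with inverse given by wedge multiplication by exp(−a ⊗ s). -/
/-- A (positively graded) commutative differential graded algebra over a field `k`:
a grading `A : ℕ → Type` of `k`-vector spaces, a unital graded product, and a degree `+1`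
differential satisfying `d ∘ d = 0`, graded commutativity and the graded Leibniz rule. -/
structure GCDA (k : Type) [Field k] where
  A : ℕ → Type
  acg : ∀ n, AddCommGroup (A n)
  amod : ∀ n, Module k (A n)
  mul : ∀ p q : ℕ, A p → A q → A (p + q)
  one : A 0
  d : ∀ p : ℕ, A p → A (p + 1)
  d_add : ∀ p (x y : A p), d p (x + y) = d p x + d p y
  d_smul : ∀ p (c : k) (x : A p), d p (c • x) = c • d p x
  d_d : ∀ p (x : A p), d (p + 1) (d p x) = 0
  mul_add : ∀ p q (x : A p) (y z : A q), mul p q x (y + z) = mul p q x y + mul p q x z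
  add_mul : ∀ p q (x y : A p) (z : A q), mul p q (x + y) z = mul p q x z + mul p q y z
  smul_mul : ∀ p q (c : k) (x : A p) (y : A q), mul p q (c • x) y = c • mul p q x y
  mul_smul : ∀ p q (c : k) (x : A p) (y : A q), mul p q x (c • y) = c • mul p q x y
  one_mul : ∀ p (x : A p), mul 0 p one x = cast (congrArg A (Nat.zero_add p)).symm x
  mul_one : ∀ p (x : A p), mul p 0 x one = x
  mul_assoc : ∀ p q r (x : A p) (y : A q) (z : A r),
    mul (p + q) r (mul p q x y) z
      = cast (congrArg A (by omega : p + (q + r) = p + q + r)) (mul p (q + r) x (mul q r y z))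
  mul_comm : ∀ p q (x : A p) (y : A q),
    mul p q x y = cast (congrArg A (by omega : q + p = p + q))
      ((-1 : k) ^ (p * q) • mul q p y x)
  leibniz : ∀ p q (x : A p) (y : A q),
    d (p + q) (mul p q x y)
      = cast (congrArg A (by omega : p + 1 + q = p + q + 1)) (mul (p + 1) q (d p x) y)
        + cast (congrArg A (by omega : p + (q + 1) = p + q + 1))
            ((-1 : k) ^ p • mul p (q + 1) x (d q y))

attribute [instance] GCDA.acg GCDA.amod

variable {k : Type} [Field k]

/-- Left multiplication by a degree-one element, recast to land in degree `p + 1`. -/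
def GCDA.etaMul (B : GCDA k) (η : B.A 1) (p : ℕ) (x : B.A p) : B.A (p + 1) :=
  cast (congrArg B.A (by omega : 1 + p = p + 1)) (B.mul 1 p η x)

/-- The differential `d_η` of the `m`-thickening `A(η, m)`: an element of
`A^p ⊗ k[s]/(sᵐ)` is recorded as the tuple of its coefficients `(ω_0, …, ω_{m−1})`
(`ω = Σ_j ω_j ⊗ sʲ`), and `d_η(ω ⊗ φ) = dω ⊗ φ + (η ∧ ω) ⊗ sφ` becomes
`(d_η ω)_j = d(ω_j) + η ∧ ω_{j−1}`. -/
def GCDA.thickD (B : GCDA k) (η : B.A 1) (m : ℕ) (p : ℕ) (ω : Fin m → B.A p) :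
    Fin m → B.A (p + 1) := fun j =>
  B.d p (ω j) +
    (if _h : (j : ℕ) = 0 then 0
     else B.etaMul η p (ω ⟨(j : ℕ) - 1, lt_of_le_of_lt (Nat.sub_le _ _) j.isLt⟩))

/-- Powers `aⁿ` of a degree-zero element. -/
def GCDA.pow0 (B : GCDA k) (a : B.A 0) : ℕ → B.A 0
  | 0 => B.one
  | n + 1 => B.mul 0 0 a (B.pow0 a n)

/-- The coefficient `(1/n!)·aⁿ` of `sⁿ` in `exp(a ⊗ s)`. -/
noncomputable def GCDA.expCoef (B : GCDA k) (a : B.A 0) (n : ℕ) : B.A 0 :=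
  ((n.factorial : k)⁻¹) • B.pow0 a n

/-- Wedge multiplication by `exp(a ⊗ s) = Σ_{n<m} (1/n!) aⁿ ⊗ sⁿ` on the thickening
`A ⊗ k[s]/(sᵐ)` (recorded by coefficient tuples). -/
noncomputable def GCDA.expWedge (B : GCDA k) (a : B.A 0) (m p : ℕ)
    (ω : Fin m → B.A p) : Fin m → B.A p := fun j =>
  ∑ i ∈ Finset.range ((j : ℕ) + 1),
    cast (congrArg B.A (Nat.zero_add p))
      (B.mul 0 p (B.expCoef a i)
        (ω ⟨(j : ℕ) - i, lt_of_le_of_lt (Nat.sub_le _ _) j.isLt⟩))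

namespace GCDA

variable {k : Type} [Field k] (B : GCDA k)

theorem cast_triv {α : Type} (h : α = α) (x : α) : cast h x = x := rfl

/-- Cast between graded pieces. -/
def castA {n m : ℕ} (h : n = m) (x : B.A n) : B.A m := cast (congrArg B.A h) x

theorem castA_heq {n m : ℕ} (h : n = m) (x : B.A n) : HEq (B.castA h x) x := by
  cases h; rfl

theorem castA_add {n m : ℕ} (h : n = m) (x y : B.A n) :
    B.castA h (x + y) = B.castA h x + B.castA h y := by cases h; rfl

theorem castA_neg {n m : ℕ} (h : n = m) (x : B.A n) :
    B.castA h (-x) = -(B.castA h x) := by cases h; rfl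

theorem castA_smul' {n m : ℕ} (h : n = m) (t : k) (x : B.A n) :
    B.castA h (t • x) = t • B.castA h x := by cases h; rfl

theorem castA_zero {n m : ℕ} (h : n = m) : B.castA h (0 : B.A n) = 0 := by cases h; rfl

theorem d_castA {n m : ℕ} (h : n = m) (h' : n + 1 = m + 1) (x : B.A n) :
    B.d m (B.castA h x) = B.castA h' (B.d n x) := by cases h; rfl

theorem mul_hcongr {p p' q q' : ℕ} (hp : p = p') (hq : q = q')
    {x : B.A p} {x' : B.A p'} {y : B.A q} {y' : B.A q'}
    (hx : HEq x x') (hy : HEq y y') :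
    HEq (B.mul p q x y) (B.mul p' q' x' y') := by
  subst hp; subst hq; cases hx; cases hy; rfl

theorem hassoc (p q r : ℕ) (x : B.A p) (y : B.A q) (z : B.A r) :
    HEq (B.mul (p + q) r (B.mul p q x y) z) (B.mul p (q + r) x (B.mul q r y z)) := by
  rw [B.mul_assoc]; exact cast_heq _ _

theorem hcomm_zero_left (q : ℕ) (x : B.A 0) (y : B.A q) :
    HEq (B.mul 0 q x y) (B.mul q 0 y x) := by
  rw [B.mul_comm 0 q x y]
  refine (cast_heq _ _).trans (heq_of_eq ?_)
  rw [Nat.zero_mul, pow_zero, one_smul]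

theorem hcomm_zero_right (p : ℕ) (x : B.A p) (y : B.A 0) :
    HEq (B.mul p 0 x y) (B.mul 0 p y x) := by
  rw [B.mul_comm p 0 x y]
  refine (cast_heq _ _).trans (heq_of_eq ?_)
  rw [Nat.mul_zero, pow_zero, one_smul]

/-- Multiplication by a degree `0` element, recast to stay in degree `p`. -/
def smul0 (c : B.A 0) {p : ℕ} (x : B.A p) : B.A p :=
  B.castA (Nat.zero_add p) (B.mul 0 p c x)

theorem smul0_heq (c : B.A 0) {p : ℕ} (x : B.A p) :
    HEq (B.smul0 c x) (B.mul 0 p c x) := cast_heq _ _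

theorem etaMul_heq (η : B.A 1) (p : ℕ) (x : B.A p) :
    HEq (B.etaMul η p x) (B.mul 1 p η x) := cast_heq _ _

theorem etaMul_eq_castA (η : B.A 1) (p : ℕ) (x : B.A p) :
    B.etaMul η p x = B.castA (by omega : 1 + p = p + 1) (B.mul 1 p η x) := rfl

theorem zero_mul' (p q : ℕ) (y : B.A q) : B.mul p q 0 y = 0 := by
  have h := B.add_mul p q 0 0 y
  rw [add_zero] at h
  exact left_eq_add.mp h

theorem mul_zero' (p q : ℕ) (x : B.A p) : B.mul p q x 0 = 0 := by
  have h := B.mul_add p q x 0 0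
  rw [add_zero] at h
  exact left_eq_add.mp h

theorem neg_mul' (p q : ℕ) (x : B.A p) (y : B.A q) :
    B.mul p q (-x) y = -B.mul p q x y := by
  rw [show (-x) = (-1 : k) • x from (neg_one_smul k x).symm, B.smul_mul, neg_one_smul]

theorem d_zero (p : ℕ) : B.d p (0 : B.A p) = 0 := by
  have h := B.d_add p 0 0
  rw [add_zero] at h
  exact left_eq_add.mp h

theorem smul0_add (c : B.A 0) {p : ℕ} (x y : B.A p) :
    B.smul0 c (x + y) = B.smul0 c x + B.smul0 c y := by
  unfold smul0; rw [B.mul_add, B.castA_add]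

theorem add_smul0 (c c' : B.A 0) {p : ℕ} (x : B.A p) :
    B.smul0 (c + c') x = B.smul0 c x + B.smul0 c' x := by
  unfold smul0; rw [B.add_mul, B.castA_add]

theorem smul0_zero (c : B.A 0) {p : ℕ} : B.smul0 c (0 : B.A p) = 0 := by
  unfold smul0; rw [B.mul_zero', B.castA_zero]

theorem zero_smul0 {p : ℕ} (x : B.A p) : B.smul0 (0 : B.A 0) x = 0 := by
  unfold smul0; rw [B.zero_mul', B.castA_zero]

theorem smul0_sub (c : B.A 0) {p : ℕ} (x y : B.A p) :
    B.smul0 c (x - y) = B.smul0 c x - B.smul0 c y := by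
  have h := B.smul0_add c (x - y) y
  rw [sub_add_cancel] at h
  exact eq_sub_of_add_eq h.symm

theorem one_smul0 {p : ℕ} (x : B.A p) : B.smul0 B.one x = x := by
  apply eq_of_heq
  refine (B.smul0_heq _ _).trans ?_
  rw [B.one_mul]; exact cast_heq _ _

theorem smul0_smul0 (c c' : B.A 0) {p : ℕ} (x : B.A p) :
    B.smul0 c (B.smul0 c' x) = B.smul0 (B.mul 0 0 c c') x := by
  apply eq_of_heq
  refine (B.smul0_heq _ _).trans ?_
  refine (B.mul_hcongr rfl (Nat.zero_add p).symm HEq.rfl (B.smul0_heq _ _)).trans ?_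
  refine ((B.hassoc 0 0 p c c' x).symm).trans ?_
  exact (B.smul0_heq _ _).symm

theorem etaMul_add (η : B.A 1) (p : ℕ) (x y : B.A p) :
    B.etaMul η p (x + y) = B.etaMul η p x + B.etaMul η p y := by
  rw [B.etaMul_eq_castA, B.etaMul_eq_castA, B.etaMul_eq_castA, B.mul_add, B.castA_add]

theorem etaMul_zero (η : B.A 1) (p : ℕ) : B.etaMul η p (0 : B.A p) = 0 := by
  rw [B.etaMul_eq_castA, B.mul_zero', B.castA_zero]

theorem zero_etaMul (p : ℕ) (x : B.A p) : B.etaMul (0 : B.A 1) p x = 0 := by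
  rw [B.etaMul_eq_castA, B.zero_mul', B.castA_zero]

theorem sub_etaMul (η η' : B.A 1) (p : ℕ) (x : B.A p) :
    B.etaMul (η - η') p x = B.etaMul η p x - B.etaMul η' p x := by
  rw [B.etaMul_eq_castA, B.etaMul_eq_castA, B.etaMul_eq_castA,
    show η - η' = η + -η' from sub_eq_add_neg η η',
    B.add_mul, B.neg_mul', castA_add, castA_neg, ← sub_eq_add_neg]

theorem etaMul_smul0 (η : B.A 1) (c : B.A 0) (p : ℕ) (x : B.A p) :
    B.etaMul η p (B.smul0 c x) = B.smul0 c (B.etaMul η p x) := by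
  apply eq_of_heq
  refine (B.etaMul_heq _ _ _).trans ?_
  refine (B.mul_hcongr rfl (Nat.zero_add p).symm HEq.rfl (B.smul0_heq _ _)).trans ?_
  refine ((B.hassoc 1 0 p η c x).symm).trans ?_
  refine (B.mul_hcongr (rfl : 1 + 0 = 0 + 1) rfl (B.hcomm_zero_right 1 η c) HEq.rfl).trans ?_
  refine (B.hassoc 0 1 p c η x).trans ?_
  refine HEq.symm ?_
  refine (B.smul0_heq _ _).trans ?_
  exact B.mul_hcongr rfl (by omega) HEq.rfl (B.etaMul_heq _ _ _)

theorem etaMul_cmul (c : B.A 0) (η : B.A 1) (p : ℕ) (x : B.A p) :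
    B.etaMul (B.mul 0 1 c η) p x = B.smul0 c (B.etaMul η p x) := by
  apply eq_of_heq
  refine (B.etaMul_heq _ _ _).trans ?_
  refine HEq.trans ?_ (B.smul0_heq c (B.etaMul η p x)).symm
  refine HEq.trans ?_ (B.mul_hcongr rfl (by omega : 1 + p = p + 1) HEq.rfl
    (B.etaMul_heq η p x).symm)
  exact B.hassoc 0 1 p c η x

theorem d_smul0 (c : B.A 0) {p : ℕ} (x : B.A p) :
    B.d p (B.smul0 c x) = B.etaMul (B.d 0 c) p x + B.smul0 c (B.d p x) := by
  have h1 : B.d p (B.smul0 c x) = B.castA (by omega) (B.d (0 + p) (B.mul 0 p c x)) :=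
    B.d_castA (Nat.zero_add p) (by omega) _
  rw [h1, B.leibniz, B.castA_add]
  congr 1
  · apply eq_of_heq
    exact ((B.castA_heq _ _).trans (cast_heq _ _)).trans (B.etaMul_heq _ _ _).symm
  · rw [pow_zero, one_smul]
    apply eq_of_heq
    exact ((B.castA_heq _ _).trans (cast_heq _ _)).trans (B.smul0_heq _ _).symm

theorem d_sum {ι : Type} (p : ℕ) (s : Finset ι) (g : ι → B.A p) :
    B.d p (∑ i ∈ s, g i) = ∑ i ∈ s, B.d p (g i) :=
  map_sum (AddMonoidHom.mk' (B.d p) (B.d_add p)) g s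

theorem etaMul_sum {ι : Type} (η : B.A 1) (p : ℕ) (s : Finset ι) (g : ι → B.A p) :
    B.etaMul η p (∑ i ∈ s, g i) = ∑ i ∈ s, B.etaMul η p (g i) :=
  map_sum (AddMonoidHom.mk' (B.etaMul η p) (B.etaMul_add η p)) g s

theorem smul0_sum {ι : Type} (c : B.A 0) {p : ℕ} (s : Finset ι) (g : ι → B.A p) :
    B.smul0 c (∑ i ∈ s, g i) = ∑ i ∈ s, B.smul0 c (g i) :=
  map_sum (AddMonoidHom.mk' (fun x => B.smul0 c x) (B.smul0_add c)) g s

theorem sum_smul0 {ι : Type} {p : ℕ} (s : Finset ι) (g : ι → B.A 0) (x : B.A p) :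
    B.smul0 (∑ i ∈ s, g i) x = ∑ i ∈ s, B.smul0 (g i) x :=
  map_sum (AddMonoidHom.mk' (fun c => B.smul0 c x) (fun c c' => B.add_smul0 c c' x)) g s

theorem pow0_mul (a : B.A 0) (i j : ℕ) :
    B.mul 0 0 (B.pow0 a i) (B.pow0 a j) = B.pow0 a (i + j) := by
  induction i with
  | zero =>
    rw [show (0 : ℕ) + j = j from Nat.zero_add j]
    apply eq_of_heq
    show HEq (B.mul 0 0 B.one (B.pow0 a j)) (B.pow0 a j)
    rw [B.one_mul]; exact cast_heq _ _
  | succ i ih =>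
    rw [show i + 1 + j = (i + j) + 1 by omega]
    apply eq_of_heq
    show HEq (B.mul 0 0 (B.mul 0 0 a (B.pow0 a i)) (B.pow0 a j))
      (B.mul 0 0 a (B.pow0 a (i + j)))
    refine (B.hassoc 0 0 0 a (B.pow0 a i) (B.pow0 a j)).trans ?_
    rw [ih]

theorem pow0_neg (a : B.A 0) (n : ℕ) :
    B.pow0 (-a) n = ((-1 : k) ^ n) • B.pow0 a n := by
  induction n with
  | zero => rw [pow_zero, one_smul]; rfl
  | succ n ih =>
    show B.mul 0 0 (-a) (B.pow0 (-a) n) = ((-1 : k) ^ (n + 1)) • B.mul 0 0 a (B.pow0 a n)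
    rw [ih, B.mul_smul, B.neg_mul', smul_neg, ← neg_smul,
      show -((-1 : k) ^ n) = (-1 : k) ^ (n + 1) from by ring]

theorem expCoef_zero (a : B.A 0) : B.expCoef a 0 = B.one := by
  unfold expCoef
  rw [Nat.factorial_zero, Nat.cast_one, inv_one, one_smul]
  rfl

theorem d_one : B.d 0 B.one = 0 := by
  have h := B.leibniz 0 0 B.one B.one
  rw [B.mul_one, B.mul_one, B.one_mul] at h
  simp only [cast_triv, pow_zero, one_smul] at h
  have h2 : B.d 0 B.one = B.d 0 B.one + B.d 0 B.one := h
  exact left_eq_add.mp h2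

theorem d_expCoef_zero (a : B.A 0) : B.d 0 (B.expCoef a 0) = 0 := by
  rw [B.expCoef_zero, B.d_one]

theorem d_pow0 (a : B.A 0) (n : ℕ) :
    B.d 0 (B.pow0 a (n + 1)) = ((n : k) + 1) • B.mul 0 1 (B.pow0 a n) (B.d 0 a) := by
  induction n with
  | zero =>
    show B.d 0 (B.mul 0 0 a B.one) = (((0 : ℕ) : k) + 1) • B.mul 0 1 B.one (B.d 0 a)
    rw [B.mul_one, B.one_mul, cast_triv, show ((0 : ℕ) : k) + 1 = (1 : k) from by norm_num,
      one_smul]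
  | succ n ih =>
    show B.d (0 + 0) (B.mul 0 0 a (B.pow0 a (n + 1)))
      = ((((n + 1) : ℕ) : k) + 1) • B.mul 0 1 (B.pow0 a (n + 1)) (B.d 0 a)
    rw [B.leibniz 0 0 a (B.pow0 a (n + 1)), cast_triv, cast_triv, pow_zero, one_smul, ih]
    have e1 : B.mul (0 + 1) 0 (B.d 0 a) (B.pow0 a (n + 1))
        = B.mul 0 1 (B.pow0 a (n + 1)) (B.d 0 a) :=
      eq_of_heq (B.hcomm_zero_right (0 + 1) (B.d 0 a) (B.pow0 a (n + 1)))
    have e2 : B.mul 0 (0 + 1) a (B.mul 0 1 (B.pow0 a n) (B.d 0 a))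
        = B.mul 0 1 (B.pow0 a (n + 1)) (B.d 0 a) :=
      eq_of_heq ((B.hassoc 0 0 1 a (B.pow0 a n) (B.d 0 a)).symm)
    rw [B.mul_smul, e1, e2, Nat.cast_succ]
    module

theorem d_expCoef [CharZero k] (a : B.A 0) (n : ℕ) :
    B.d 0 (B.expCoef a (n + 1)) = B.mul 0 1 (B.expCoef a n) (B.d 0 a) := by
  unfold expCoef
  rw [B.d_smul, B.d_pow0, B.smul_mul, smul_smul]
  congr 1
  have h4 : ((n.factorial : k)) ≠ 0 := Nat.cast_ne_zero.mpr n.factorial_ne_zero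
  have h5 : ((n : k) + 1) ≠ 0 := by
    have := Nat.cast_add_one_ne_zero (R := k) n
    push_cast at this ⊢
    exact this
  rw [Nat.factorial_succ]
  push_cast
  field_simp

theorem expCoef_conv [CharZero k] (a : B.A 0) (n : ℕ) :
    ∑ i ∈ Finset.range (n + 1), B.mul 0 0 (B.expCoef (-a) i) (B.expCoef a (n - i))
      = if n = 0 then B.one else 0 := by
  have hterm : ∀ i ∈ Finset.range (n + 1),
      B.mul 0 0 (B.expCoef (-a) i) (B.expCoef a (n - i))
        = ((-1 : k) ^ i * ((i.factorial : k)⁻¹ * (((n - i).factorial : k))⁻¹)) •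
            B.pow0 a n := by
    intro i hi
    have hin : i ≤ n := Nat.lt_succ_iff.mp (Finset.mem_range.mp hi)
    unfold expCoef
    rw [B.pow0_neg, B.smul_mul, B.smul_mul, B.mul_smul, B.pow0_mul,
      show i + (n - i) = n from by omega, smul_smul, smul_smul]
    congr 1
    ring
  refine (Finset.sum_congr rfl hterm).trans ?_
  rw [← Finset.sum_smul]
  rcases Nat.eq_zero_or_pos n with hn | hn
  · subst hn
    rw [if_pos rfl, Finset.sum_range_one]
    norm_num [Nat.factorial_zero]
    show B.pow0 a 0 = B.one
    rfl
  · rw [if_neg (by omega)]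
    have hsum : (∑ i ∈ Finset.range (n + 1),
        (-1 : k) ^ i * ((i.factorial : k)⁻¹ * (((n - i).factorial : k))⁻¹)) = 0 := by
      have h1 : ∀ i ∈ Finset.range (n + 1),
          (-1 : k) ^ i * ((i.factorial : k)⁻¹ * (((n - i).factorial : k))⁻¹)
            = ((-1 : k) ^ i * (n.choose i : k)) * ((n.factorial : k))⁻¹ := by
        intro i hi
        have hin : i ≤ n := Nat.lt_succ_iff.mp (Finset.mem_range.mp hi)
        have hfac := Nat.choose_mul_factorial_mul_factorial hin
        have hfk : ((n.choose i : k) * (i.factorial : k) * ((n - i).factorial : k))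
            = (n.factorial : k) := by exact_mod_cast congrArg (Nat.cast (R := k)) hfac
        have h2 : ((i.factorial : k)) ≠ 0 := Nat.cast_ne_zero.mpr i.factorial_ne_zero
        have h3 : (((n - i).factorial : k)) ≠ 0 :=
          Nat.cast_ne_zero.mpr (n - i).factorial_ne_zero
        have h4 : ((n.factorial : k)) ≠ 0 := Nat.cast_ne_zero.mpr n.factorial_ne_zero
        have h7 : ((n.choose i : ℕ) : k) ≠ 0 :=
          Nat.cast_ne_zero.mpr (Nat.choose_pos hin).ne'
        rw [← hfk]
        field_simp
      refine (Finset.sum_congr rfl h1).trans ?_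
      rw [← Finset.sum_mul]
      have h5 : (∑ i ∈ Finset.range (n + 1), (-1 : k) ^ i * (n.choose i : k)) = 0 := by
        have h6 := Int.alternating_sum_range_choose_of_ne (n := n) (by omega)
        calc (∑ i ∈ Finset.range (n + 1), (-1 : k) ^ i * (n.choose i : k))
            = ((∑ i ∈ Finset.range (n + 1), ((-1) ^ i * n.choose i : ℤ) : ℤ) : k) := by
              push_cast; rfl
          _ = 0 := by rw [h6]; exact Int.cast_zero
      rw [h5, zero_mul]
    rw [hsum, zero_smul]

theorem sum_tri {M : Type} [AddCommMonoid M] (f : ℕ → ℕ → M) (j : ℕ) :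
    ∑ l ∈ Finset.range (j + 1), ∑ i ∈ Finset.range (j + 1 - l), f l i
      = ∑ n ∈ Finset.range (j + 1), ∑ l ∈ Finset.range (n + 1), f l (n - l) := by
  rw [Finset.sum_sigma', Finset.sum_sigma']
  refine Finset.sum_bij' (fun x _ => (⟨x.1 + x.2, x.1⟩ : (_ : ℕ) × ℕ))
    (fun x _ => (⟨x.2, x.1 - x.2⟩ : (_ : ℕ) × ℕ)) ?_ ?_ ?_ ?_ ?_
  · rintro ⟨l, i⟩ h
    simp only [Finset.mem_sigma, Finset.mem_range] at h ⊢
    omega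
  · rintro ⟨n, l⟩ h
    simp only [Finset.mem_sigma, Finset.mem_range] at h ⊢
    omega
  · rintro ⟨l, i⟩ h
    show (⟨l, l + i - l⟩ : (_ : ℕ) × ℕ) = ⟨l, i⟩
    rw [Nat.add_sub_cancel_left]
  · rintro ⟨n, l⟩ h
    simp only [Finset.mem_sigma, Finset.mem_range] at h
    show (⟨l + (n - l), l⟩ : (_ : ℕ) × ℕ) = ⟨n, l⟩
    have hln : l + (n - l) = n := by omega
    rw [hln]
  · rintro ⟨l, i⟩ h
    simp only [Finset.mem_sigma, Finset.mem_range] at h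
    simp only [Nat.add_sub_cancel_left]

/-- The thickened differential on coefficient sequences indexed by `ℕ`. -/
def thD (η : B.A 1) {p : ℕ} (c : ℕ → B.A p) (j : ℕ) : B.A (p + 1) :=
  B.d p (c j) + (if j = 0 then 0 else B.etaMul η p (c (j - 1)))

/-- Wedging with `exp(a ⊗ s)` on coefficient sequences indexed by `ℕ`. -/
noncomputable def expW (a : B.A 0) {p : ℕ} (c : ℕ → B.A p) (j : ℕ) : B.A p :=
  ∑ i ∈ Finset.range (j + 1), B.smul0 (B.expCoef a i) (c (j - i))

theorem expW_chain [CharZero k] (a : B.A 0) (η₁ η₂ : B.A 1) (ha : B.d 0 a = η₁ - η₂)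
    {p : ℕ} (c : ℕ → B.A p) (j : ℕ) :
    B.thD η₂ (B.expW a c) j = B.expW a (B.thD η₁ c) j := by
  have hL1 : B.d p (B.expW a c j)
      = (∑ i ∈ Finset.range (j + 1), B.etaMul (B.d 0 (B.expCoef a i)) p (c (j - i)))
        + ∑ i ∈ Finset.range (j + 1), B.smul0 (B.expCoef a i) (B.d p (c (j - i))) := by
    unfold expW
    rw [B.d_sum, ← Finset.sum_add_distrib]
    exact Finset.sum_congr rfl fun i _ => B.d_smul0 _ _
  have hL1a : (∑ i ∈ Finset.range (j + 1), B.etaMul (B.d 0 (B.expCoef a i)) p (c (j - i)))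
      = (∑ i ∈ Finset.range j, B.smul0 (B.expCoef a i) (B.etaMul η₁ p (c (j - 1 - i))))
        - ∑ i ∈ Finset.range j, B.smul0 (B.expCoef a i) (B.etaMul η₂ p (c (j - 1 - i))) := by
    rw [Finset.sum_range_succ']
    rw [B.d_expCoef_zero, B.zero_etaMul, add_zero]
    have hstep : ∀ i ∈ Finset.range j,
        B.etaMul (B.d 0 (B.expCoef a (i + 1))) p (c (j - (i + 1)))
          = B.smul0 (B.expCoef a i) (B.etaMul η₁ p (c (j - 1 - i)))
            - B.smul0 (B.expCoef a i) (B.etaMul η₂ p (c (j - 1 - i))) := by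
      intro i _
      rw [show j - (i + 1) = j - 1 - i from by omega, B.d_expCoef, B.etaMul_cmul, ha,
        B.sub_etaMul, B.smul0_sub]
    refine (Finset.sum_congr rfl hstep).trans ?_
    rw [Finset.sum_sub_distrib]
  have hL2 : (if j = 0 then 0 else B.etaMul η₂ p (B.expW a c (j - 1)))
      = ∑ i ∈ Finset.range j, B.smul0 (B.expCoef a i) (B.etaMul η₂ p (c (j - 1 - i))) := by
    rcases Nat.eq_zero_or_pos j with hj | hj
    · subst hj; simp
    · rw [if_neg (by omega)]
      unfold expW
      rw [B.etaMul_sum, show j - 1 + 1 = j from by omega]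
      exact Finset.sum_congr rfl fun i _ => B.etaMul_smul0 _ _ _ _
  have hR : B.expW a (B.thD η₁ c) j
      = (∑ i ∈ Finset.range (j + 1), B.smul0 (B.expCoef a i) (B.d p (c (j - i))))
        + ∑ i ∈ Finset.range j, B.smul0 (B.expCoef a i) (B.etaMul η₁ p (c (j - 1 - i))) := by
    unfold expW
    have hsplit : ∀ i ∈ Finset.range (j + 1),
        B.smul0 (B.expCoef a i) (B.thD η₁ c (j - i))
          = B.smul0 (B.expCoef a i) (B.d p (c (j - i)))
            + B.smul0 (B.expCoef a i)
                (if j - i = 0 then 0 else B.etaMul η₁ p (c (j - i - 1))) := by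
      intro i _
      unfold thD
      rw [B.smul0_add]
    refine (Finset.sum_congr rfl hsplit).trans ?_
    rw [Finset.sum_add_distrib]
    congr 1
    rw [Finset.sum_range_succ, Nat.sub_self, if_pos rfl, B.smul0_zero, add_zero]
    refine Finset.sum_congr rfl fun i hi => ?_
    have hij : i < j := Finset.mem_range.mp hi
    rw [if_neg (by omega), show j - i - 1 = j - 1 - i from by omega]
  show B.d p (B.expW a c j) + (if j = 0 then 0 else B.etaMul η₂ p (B.expW a c (j - 1)))
    = B.expW a (B.thD η₁ c) j
  rw [hR, hL1, hL1a, hL2]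
  abel

theorem expW_comp (b a : B.A 0)
    (hconv : ∀ n, ∑ i ∈ Finset.range (n + 1),
        B.mul 0 0 (B.expCoef b i) (B.expCoef a (n - i)) = if n = 0 then B.one else 0)
    {p : ℕ} (c : ℕ → B.A p) (j : ℕ) :
    B.expW b (B.expW a c) j = c j := by
  unfold expW
  have step1 : ∀ l ∈ Finset.range (j + 1),
      B.smul0 (B.expCoef b l)
          (∑ i ∈ Finset.range ((j - l) + 1), B.smul0 (B.expCoef a i) (c (j - l - i)))
        = ∑ i ∈ Finset.range (j + 1 - l),
            B.smul0 (B.mul 0 0 (B.expCoef b l) (B.expCoef a i)) (c (j - l - i)) := by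
    intro l hl
    have hlj : l ≤ j := Nat.lt_succ_iff.mp (Finset.mem_range.mp hl)
    rw [B.smul0_sum, show (j - l) + 1 = j + 1 - l from by omega]
    exact Finset.sum_congr rfl fun i _ => B.smul0_smul0 _ _ _
  refine (Finset.sum_congr rfl step1).trans ?_
  rw [sum_tri]
  have step2 : ∀ n ∈ Finset.range (j + 1),
      (∑ l ∈ Finset.range (n + 1),
          B.smul0 (B.mul 0 0 (B.expCoef b l) (B.expCoef a (n - l))) (c (j - l - (n - l))))
        = if n = 0 then c j else 0 := by
    intro n hn
    have hnj : n ≤ j := Nat.lt_succ_iff.mp (Finset.mem_range.mp hn)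
    have harg : ∀ l ∈ Finset.range (n + 1),
        B.smul0 (B.mul 0 0 (B.expCoef b l) (B.expCoef a (n - l))) (c (j - l - (n - l)))
          = B.smul0 (B.mul 0 0 (B.expCoef b l) (B.expCoef a (n - l))) (c (j - n)) := by
      intro l hl
      have hln : l ≤ n := Nat.lt_succ_iff.mp (Finset.mem_range.mp hl)
      rw [show j - l - (n - l) = j - n from by omega]
    refine (Finset.sum_congr rfl harg).trans ?_
    rw [← B.sum_smul0, hconv n]
    by_cases h0 : n = 0
    · rw [if_pos h0, if_pos h0, B.one_smul0, h0, Nat.sub_zero]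
    · rw [if_neg h0, if_neg h0, B.zero_smul0]
  refine (Finset.sum_congr rfl step2).trans ?_
  rw [Finset.sum_ite_eq' (Finset.range (j + 1)) 0 (fun _ => c j),
    if_pos (Finset.mem_range.mpr (by omega))]

theorem expWedge_eq (a : B.A 0) (m p : ℕ) (ω : Fin m → B.A p) (c : ℕ → B.A p)
    (hc : ∀ l (h : l < m), c l = ω ⟨l, h⟩) (j : Fin m) :
    B.expWedge a m p ω j = B.expW a c (j : ℕ) := by
  unfold expWedge expW
  refine Finset.sum_congr rfl fun i _ => ?_
  rw [hc ((j : ℕ) - i) (lt_of_le_of_lt (Nat.sub_le _ _) j.isLt)]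
  rfl

theorem thickD_eq (η : B.A 1) (m p : ℕ) (ω : Fin m → B.A p) (c : ℕ → B.A p)
    (hc : ∀ l (h : l < m), c l = ω ⟨l, h⟩) (j : Fin m) :
    B.thickD η m p ω j = B.thD η c (j : ℕ) := by
  unfold thickD thD
  rw [hc (j : ℕ) j.isLt]
  by_cases h0 : (j : ℕ) = 0
  · rw [dif_pos h0, if_pos h0]
  · rw [dif_neg h0, if_neg h0,
      hc ((j : ℕ) - 1) (lt_of_le_of_lt (Nat.sub_le _ _) j.isLt)]

end GCDA

/-- If `η₁, η₂ ∈ A¹ ∩ ker d` are cohomologous, say `η₁ − η₂ = da` with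
`a ∈ A⁰`, then wedge multiplication by `exp(a ⊗ s)` is a morphism of cochain complexes
`A(η₁, m) → A(η₂, m)` and is an isomorphism, with inverse wedge multiplication by
`exp(−a ⊗ s)`. -/
theorem stmt_5 {k : Type} [Field k] [CharZero k] (B : GCDA k)
    (η₁ η₂ : B.A 1) (h₁ : B.d 1 η₁ = 0) (h₂ : B.d 1 η₂ = 0)
    (a : B.A 0) (ha : B.d 0 a = η₁ - η₂) (m : ℕ) (hm : 1 ≤ m) :
    (∀ (p : ℕ) (ω : Fin m → B.A p),
      B.thickD η₂ m p (B.expWedge a m p ω) = B.expWedge a m (p + 1) (B.thickD η₁ m p ω)) ∧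
    (∀ p : ℕ,
      Function.LeftInverse (B.expWedge (-a) m p) (B.expWedge a m p) ∧
      Function.RightInverse (B.expWedge (-a) m p) (B.expWedge a m p)) := by
  have key : ∀ (p : ℕ) (b a' : B.A 0),
      (∀ n, ∑ i ∈ Finset.range (n + 1),
          B.mul 0 0 (B.expCoef b i) (B.expCoef a' (n - i)) = if n = 0 then B.one else 0) →
      ∀ ω : Fin m → B.A p, B.expWedge b m p (B.expWedge a' m p ω) = ω := by
    intro p b a' hconv ω
    funext j
    have hc : ∀ l (h : l < m),
        (fun l => if h : l < m then ω ⟨l, h⟩ else ω ⟨0, hm⟩) l = ω ⟨l, h⟩ :=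
      fun l h => dif_pos h
    set c : ℕ → B.A p := fun l => if h : l < m then ω ⟨l, h⟩ else ω ⟨0, hm⟩ with hcdef
    have hcE : ∀ l (h : l < m), B.expW a' c l = (B.expWedge a' m p ω) ⟨l, h⟩ :=
      fun l h => (B.expWedge_eq a' m p ω c hc ⟨l, h⟩).symm
    calc B.expWedge b m p (B.expWedge a' m p ω) j
        = B.expW b (B.expW a' c) (j : ℕ) := B.expWedge_eq b m p _ _ hcE j
      _ = c (j : ℕ) := B.expW_comp b a' hconv c (j : ℕ)
      _ = ω j := by rw [hc (j : ℕ) j.isLt]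
  constructor
  · intro p ω
    funext j
    have hc : ∀ l (h : l < m),
        (fun l => if h : l < m then ω ⟨l, h⟩ else ω ⟨0, hm⟩) l = ω ⟨l, h⟩ :=
      fun l h => dif_pos h
    set c : ℕ → B.A p := fun l => if h : l < m then ω ⟨l, h⟩ else ω ⟨0, hm⟩ with hcdef
    have hcE : ∀ l (h : l < m), B.expW a c l = (B.expWedge a m p ω) ⟨l, h⟩ :=
      fun l h => (B.expWedge_eq a m p ω c hc ⟨l, h⟩).symm
    calc B.thickD η₂ m p (B.expWedge a m p ω) j
        = B.thD η₂ (B.expW a c) (j : ℕ) := B.thickD_eq η₂ m p _ _ hcE j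
      _ = B.expW a (B.thD η₁ c) (j : ℕ) := B.expW_chain a η₁ η₂ ha c (j : ℕ)
      _ = B.expWedge a m (p + 1) (B.thickD η₁ m p ω) j := by
          refine (B.expWedge_eq a m (p + 1) _ _ ?_ j).symm
          intro l h
          exact (B.thickD_eq η₁ m p ω c hc ⟨l, h⟩).symm
  · intro p
    constructor
    · intro ω
      exact key p (-a) a (fun n => B.expCoef_conv a n) ω
    · intro ω
      refine key p a (-a) (fun n => ?_) ω
      have h := B.expCoef_conv (-a) n
      rwa [neg_neg] at h
end

section
/- Let F: A → B be a morphism of cdgas over a field k of characteristic 0 that is a quasi-isomorphism, let η ∈ A¹ ∩ ker d, and let m ≥ 1. Then the induced map F ⊗ id: A(η, m) → B(F(η), m) is a quasi-isomorphism of cochain complexes. -/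
variable {k : Type} [Field k]

/-- A morphism of cdgas: a degreewise `k`-linear map commuting with the product, unit and
differential. -/
structure GCDAHom (B C : GCDA k) where
  F : ∀ p : ℕ, B.A p → C.A p
  F_add : ∀ p (x y : B.A p), F p (x + y) = F p x + F p y
  F_smul : ∀ p (c : k) (x : B.A p), F p (c • x) = c • F p x
  F_one : F 0 B.one = C.one
  F_mul : ∀ p q (x : B.A p) (y : B.A q), F (p + q) (B.mul p q x y) = C.mul p q (F p x) (F q y)
  F_d : ∀ p (x : B.A p), F (p + 1) (B.d p x) = C.d p (F p x)

/-- A map of (positively graded) cochain complexes is a quasi-isomorphism iff it is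
injective and surjective on cohomology, expressed elementwise. -/
def IsQIso (X Y : ℕ → Type) [∀ n, AddCommGroup (X n)] [∀ n, AddCommGroup (Y n)]
    (dX : ∀ p : ℕ, X p → X (p + 1)) (dY : ∀ p : ℕ, Y p → Y (p + 1))
    (F : ∀ p : ℕ, X p → Y p) : Prop :=
  (∀ x : X 0, dX 0 x = 0 → F 0 x = 0 → x = 0) ∧
  (∀ y : Y 0, dY 0 y = 0 → ∃ x : X 0, dX 0 x = 0 ∧ F 0 x = y) ∧
  (∀ (p : ℕ) (x : X (p + 1)), dX (p + 1) x = 0 →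
    (∃ y : Y p, F (p + 1) x = dY p y) → ∃ z : X p, x = dX p z) ∧
  (∀ (p : ℕ) (y : Y (p + 1)), dY (p + 1) y = 0 →
    ∃ x : X (p + 1), dX (p + 1) x = 0 ∧ ∃ w : Y p, F (p + 1) x = y + dY p w)

namespace StmtSix

section CastLemmas
variable (B : GCDA k)

lemma castA_zero {n n' : ℕ} (h : n = n') : cast (congrArg B.A h) (0 : B.A n) = 0 := by
  subst h; rfl

lemma castA_add {n n' : ℕ} (h : n = n') (x y : B.A n) :
    cast (congrArg B.A h) (x + y) = cast (congrArg B.A h) x + cast (congrArg B.A h) y := by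
  subst h; rfl

lemma castA_neg {n n' : ℕ} (h : n = n') (x : B.A n) :
    cast (congrArg B.A h) (-x) = - cast (congrArg B.A h) x := by
  subst h; rfl

lemma castA_eq_zero {n n' : ℕ} (h : n = n') (x : B.A n) :
    cast (congrArg B.A h) x = 0 ↔ x = 0 := by
  subst h; exact Iff.rfl

lemma castA_castA {a b c : ℕ} (h1 : a = b) (h2 : b = c) (x : B.A a) :
    cast (congrArg B.A h2) (cast (congrArg B.A h1) x) = cast (congrArg B.A (h1.trans h2)) x := by
  subst h1; subst h2; rfl

lemma d_castA {n n' : ℕ} (h : n = n') (x : B.A n) :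
    B.d n' (cast (congrArg B.A h) x)
      = cast (congrArg B.A (by rw [h] : n + 1 = n' + 1)) (B.d n x) := by
  subst h; rfl

lemma mul_castA_right (p : ℕ) {q q' : ℕ} (h : q = q') (x : B.A p) (y : B.A q) :
    B.mul p q' x (cast (congrArg B.A h) y)
      = cast (congrArg B.A (by rw [h] : p + q = p + q')) (B.mul p q x y) := by
  subst h; rfl

lemma zero_mul' (p q : ℕ) (y : B.A q) : B.mul p q 0 y = 0 := by
  have h := B.add_mul p q 0 0 y
  rw [add_zero] at h
  exact (left_eq_add.mp h)

lemma mul_zero' (p q : ℕ) (x : B.A p) : B.mul p q x 0 = 0 := by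
  have h := B.mul_add p q x 0 0
  rw [add_zero] at h
  exact (left_eq_add.mp h)

end CastLemmas

section Alg
variable (B : GCDA k)

lemma d_zero (p : ℕ) : B.d p (0 : B.A p) = 0 := by
  have h := B.d_add p 0 0
  rw [add_zero] at h
  exact (left_eq_add.mp h)

lemma etaMul_zero (η : B.A 1) (p : ℕ) : B.etaMul η p (0 : B.A p) = 0 := by
  unfold GCDA.etaMul
  rw [mul_zero', castA_zero]
  all_goals omega

lemma etaMul_add (η : B.A 1) (p : ℕ) (x y : B.A p) :
    B.etaMul η p (x + y) = B.etaMul η p x + B.etaMul η p y := by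
  unfold GCDA.etaMul
  rw [B.mul_add, castA_add]
  all_goals omega

lemma eta_sq [CharZero k] (η : B.A 1) : B.mul 1 1 η η = 0 := by
  have h : B.mul 1 1 η η = (-1 : k) ^ (1 * 1) • B.mul 1 1 η η := B.mul_comm 1 1 η η
  rw [pow_one, neg_one_smul] at h
  have h2 : (2 : k) • B.mul 1 1 η η = 0 := by
    rw [two_smul]
    nth_rewrite 2 [h]
    exact add_neg_cancel _
  have := smul_eq_zero.mp h2
  rcases this with h3 | h3
  · exact absurd h3 two_ne_zero
  · exact h3

lemma etaMul_etaMul [CharZero k] (η : B.A 1) (p : ℕ) (x : B.A p) :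
    B.etaMul η (p + 1) (B.etaMul η p x) = 0 := by
  unfold GCDA.etaMul
  rw [mul_castA_right, castA_castA]
  have ha := B.mul_assoc 1 1 p η η x
  rw [eta_sq, zero_mul'] at ha
  rw [(castA_eq_zero B _ _).mp ha.symm, castA_zero]
  all_goals omega

lemma d_etaMul (η : B.A 1) (hη : B.d 1 η = 0) (p : ℕ) (x : B.A p) :
    B.d (p + 1) (B.etaMul η p x) = - B.etaMul η (p + 1) (B.d p x) := by
  unfold GCDA.etaMul
  rw [d_castA, B.leibniz 1 p η x, hη, zero_mul', castA_zero, zero_add, castA_castA,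
    pow_one, neg_one_smul, castA_neg]
  all_goals omega

end Alg

section Hom
variable {B C : GCDA k} (φ : GCDAHom B C)

lemma F_zero (p : ℕ) : φ.F p (0 : B.A p) = 0 := by
  have h := φ.F_add p 0 0
  rw [add_zero] at h
  exact (left_eq_add.mp h)

lemma F_castA {n n' : ℕ} (h : n = n') (x : B.A n) :
    φ.F n' (cast (congrArg B.A h) x) = cast (congrArg C.A h) (φ.F n x) := by
  subst h; rfl

lemma F_etaMul (η : B.A 1) (p : ℕ) (x : B.A p) :
    φ.F (p + 1) (B.etaMul η p x) = C.etaMul (φ.F 1 η) p (φ.F p x) := by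
  unfold GCDA.etaMul
  rw [F_castA, φ.F_mul]
  all_goals omega

end Hom

end StmtSix

namespace StmtSix
section Thick
variable (B : GCDA k)

lemma thickD_add (η : B.A 1) (m p : ℕ) (ω ω' : Fin m → B.A p) :
    B.thickD η m p (ω + ω') = B.thickD η m p ω + B.thickD η m p ω' := by
  funext j
  simp only [GCDA.thickD, Pi.add_apply]
  rw [B.d_add]
  split_ifs with h1
  · abel
  · rw [etaMul_add]
    abel

lemma thickD_thickD [CharZero k] (η : B.A 1) (hη : B.d 1 η = 0) (m p : ℕ)
    (ω : Fin m → B.A p) : B.thickD η m (p + 1) (B.thickD η m p ω) = 0 := by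
  funext j
  simp only [GCDA.thickD, Pi.zero_apply]
  by_cases h0 : (j : ℕ) = 0
  · rw [dif_pos h0, dif_pos h0, add_zero, add_zero, B.d_d]
  · rw [dif_neg h0, dif_neg h0, B.d_add, B.d_d, zero_add, d_etaMul B η hη, etaMul_add]
    split_ifs with h1
    · rw [etaMul_zero]
      abel
    · rw [etaMul_etaMul]
      abel

lemma F_thickD {C : GCDA k} (φ : GCDAHom B C) (η : B.A 1) (m p : ℕ) (ω : Fin m → B.A p) :
    (fun j => φ.F (p + 1) (B.thickD η m p ω j)) = C.thickD (φ.F 1 η) m p (fun j => φ.F p (ω j)) := by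
  funext j
  simp only [GCDA.thickD]
  rw [φ.F_add]
  congr 1
  · exact φ.F_d p (ω j)
  · split_ifs with h1
    · exact F_zero φ _
    · exact F_etaMul φ η p _

end Thick
end StmtSix

namespace StmtSix
section Five
variable {K M Q K' M' Q' : ℕ → Type}
variable [∀ n, AddCommGroup (K n)] [∀ n, AddCommGroup (M n)] [∀ n, AddCommGroup (Q n)]
variable [∀ n, AddCommGroup (K' n)] [∀ n, AddCommGroup (M' n)] [∀ n, AddCommGroup (Q' n)]

theorem five_lemma
    (dK : ∀ p, K p →+ K (p+1)) (dM : ∀ p, M p →+ M (p+1)) (dQ : ∀ p, Q p →+ Q (p+1))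
    (dK' : ∀ p, K' p →+ K' (p+1)) (dM' : ∀ p, M' p →+ M' (p+1)) (dQ' : ∀ p, Q' p →+ Q' (p+1))
    (ι : ∀ p, K p →+ M p) (π : ∀ p, M p →+ Q p)
    (ι' : ∀ p, K' p →+ M' p) (π' : ∀ p, M' p →+ Q' p)
    (f : ∀ p, K p →+ K' p) (g : ∀ p, M p →+ M' p) (h : ∀ p, Q p →+ Q' p)
    (hdM : ∀ p x, dM (p+1) (dM p x) = 0) (hdM' : ∀ p x, dM' (p+1) (dM' p x) = 0)
    (ιd : ∀ p a, ι (p+1) (dK p a) = dM p (ι p a))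
    (πd : ∀ p x, π (p+1) (dM p x) = dQ p (π p x))
    (ι'd : ∀ p a, ι' (p+1) (dK' p a) = dM' p (ι' p a))
    (π'd : ∀ p x, π' (p+1) (dM' p x) = dQ' p (π' p x))
    (fd : ∀ p a, f (p+1) (dK p a) = dK' p (f p a))
    (gd : ∀ p x, g (p+1) (dM p x) = dM' p (g p x))
    (sq1 : ∀ p a, g p (ι p a) = ι' p (f p a))
    (sq2 : ∀ p x, h p (π p x) = π' p (g p x))
    (ιinj : ∀ p (a : K p), ι p a = 0 → a = 0)
    (πsurj : ∀ p (y : Q p), ∃ x, π p x = y)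
    (hexact : ∀ p (x : M p), π p x = 0 → ∃ a, ι p a = x)
    (ι'inj : ∀ p (a : K' p), ι' p a = 0 → a = 0)
    (π'ι' : ∀ p (a : K' p), π' p (ι' p a) = 0)
    (π'surj : ∀ p (y : Q' p), ∃ x, π' p x = y)
    (hexact' : ∀ p (x : M' p), π' p x = 0 → ∃ a, ι' p a = x)
    (hf : IsQIso K K' (fun p => dK p) (fun p => dK' p) (fun p => f p))
    (hh : IsQIso Q Q' (fun p => dQ p) (fun p => dQ' p) (fun p => h p)) :
    IsQIso M M' (fun p => dM p) (fun p => dM' p) (fun p => g p) := by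
  simp only [IsQIso] at hf hh ⊢
  obtain ⟨hf1, hf2, hf3, hf4⟩ := hf
  obtain ⟨hh1, hh2, hh3, hh4⟩ := hh
  refine ⟨?_, ?_, ?_, ?_⟩
  · -- injectivity in degree 0
    intro x hdx hgx
    have hπ0 : π 0 x = 0 := by
      refine hh1 _ ?_ ?_
      · rw [← πd, hdx, map_zero]
      · rw [sq2, hgx, map_zero]
    obtain ⟨a, ha⟩ := hexact 0 x hπ0
    have hda : dK 0 a = 0 := ιinj _ _ (by rw [ιd, ha, hdx])
    have ha0 : f 0 a = 0 := ι'inj _ _ (by rw [← sq1, ha, hgx])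
    rw [← ha, hf1 a hda ha0, map_zero]
  · -- surjectivity in degree 0
    intro y' hdy'
    obtain ⟨q, hq, hqeq⟩ := hh2 (π' 0 y') (by rw [← π'd, hdy', map_zero])
    obtain ⟨mt, hmt⟩ := πsurj 0 q
    obtain ⟨c, hc⟩ := hexact 1 (dM 0 mt) (by rw [πd, hmt, hq])
    have hdc : dK 1 c = 0 := ιinj _ _ (by rw [ιd, hc, hdM])
    obtain ⟨a', ha'⟩ := hexact' 0 (y' - g 0 mt) (by rw [map_sub, ← sq2, hmt, hqeq, sub_self])
    have key : dK' 0 a' + f 1 c = 0 := by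
      apply ι'inj
      rw [map_add, ι'd, ha', ← sq1, hc, map_sub, hdy', ← gd, zero_sub, neg_add_cancel]
    have hfc : f 1 c = dK' 0 (-a') := by
      rw [map_neg]
      exact eq_neg_of_add_eq_zero_right key
    obtain ⟨e, he⟩ := hf3 0 c hdc ⟨-a', hfc⟩
    have hcl : dK' 0 (a' + f 0 e) = 0 := by
      rw [map_add, ← fd, ← he]
      exact key
    obtain ⟨b, hbd, hbeq⟩ := hf2 (a' + f 0 e) hcl
    refine ⟨mt - ι 0 e + ι 0 b, ?_, ?_⟩
    · rw [map_add, map_sub, ← ιd, ← ιd, hbd, map_zero, add_zero, ← he, ← hc, sub_self]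
    · rw [map_add, map_sub, sq1, sq1, hbeq, map_add, ha']
      abel
  · -- injectivity in degree p+1
    intro p x hdx hex
    obtain ⟨y', hy'⟩ := hex
    obtain ⟨z, hz⟩ := hh3 p (π (p+1) x) (by rw [← πd, hdx, map_zero])
      ⟨π' p y', by rw [sq2, hy', π'd]⟩
    obtain ⟨mt, hmt⟩ := πsurj p z
    obtain ⟨a, ha⟩ := hexact (p+1) (x - dM p mt) (by rw [map_sub, hz, πd, hmt, sub_self])
    have hda : dK (p+1) a = 0 := ιinj _ _
      (by rw [ιd, ha, map_sub, hdx, hdM, zero_sub, neg_zero])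
    have hw' : dM' p (y' - g p mt) = ι' (p+1) (f (p+1) a) := by
      rw [← sq1, ha, map_sub, map_sub, ← hy', ← gd]
    have hπw : dQ' p (π' p (y' - g p mt)) = 0 := by rw [← π'd, hw', π'ι']
    obtain ⟨u, hu, t', ht1, ht2⟩ :
        ∃ u : Q p, dQ p u = 0 ∧ ∃ t' : M' p, dM' p t' = 0 ∧
          π' p t' = h p u - π' p (y' - g p mt) := by
      cases p with
      | zero =>
        obtain ⟨u, hu, hueq⟩ := hh2 _ hπw
        exact ⟨u, hu, 0, map_zero _, by rw [map_zero, hueq, sub_self]⟩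
      | succ q =>
        obtain ⟨u, hu, v', hv'⟩ := hh4 q _ hπw
        obtain ⟨vt, hvt⟩ := π'surj q v'
        exact ⟨u, hu, dM' q vt, hdM' q vt, by rw [π'd, hvt, hv', add_sub_cancel_left]⟩
    obtain ⟨ut, hut⟩ := πsurj p u
    obtain ⟨c, hc⟩ := hexact (p+1) (dM p ut) (by rw [πd, hut, hu])
    have hdc : dK (p+1) c = 0 := ιinj _ _ (by rw [ιd, hc, hdM])
    obtain ⟨b', hb'⟩ := hexact' p (y' - g p mt - g p ut + t')
      (by rw [map_add, map_sub, ← sq2, hut, ht2]; abel)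
    have key3 : f (p+1) a - f (p+1) c = dK' p b' := by
      have h0 : ι' (p+1) (f (p+1) a - f (p+1) c - dK' p b') = 0 := by
        rw [map_sub, map_sub, ι'd, hb']
        rw [map_add, map_sub, hw', ht1, add_zero, ← gd, ← hc, sq1]
        abel
      exact sub_eq_zero.mp (ι'inj _ _ h0)
    obtain ⟨e, he⟩ := hf3 p (a - c) (by rw [map_sub, hda, hdc, sub_zero])
      ⟨b', by rw [map_sub, key3]⟩
    refine ⟨mt + ι p e + ut, ?_⟩
    rw [map_add, map_add, ← ιd, ← he, map_sub, ha, ← hc]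
    abel
  · -- surjectivity in degree p+1
    intro p y' hdy'
    obtain ⟨q, hq, v', hv'⟩ := hh4 p (π' (p+1) y') (by rw [← π'd, hdy', map_zero])
    obtain ⟨mt, hmt⟩ := πsurj (p+1) q
    obtain ⟨vt, hvt⟩ := π'surj p v'
    obtain ⟨c, hc⟩ := hexact (p+1+1) (dM (p+1) mt) (by rw [πd, hmt, hq])
    have hdc : dK (p+1+1) c = 0 := ιinj _ _ (by rw [ιd, hc, hdM])
    obtain ⟨a', ha'⟩ := hexact' (p+1) (y' + dM' p vt - g (p+1) mt)
      (by rw [map_sub, map_add, π'd, hvt, ← sq2, hmt, hv']; abel)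
    have hda' : dK' (p+1) a' = - f (p+1+1) c := by
      have h0 : ι' (p+1+1) (dK' (p+1) a' + f (p+1+1) c) = 0 := by
        rw [map_add, ι'd, ha', ← sq1, hc, map_sub, map_add, hdy', hdM', ← gd]
        abel
      exact eq_neg_of_add_eq_zero_left (ι'inj _ _ h0)
    obtain ⟨e, he⟩ := hf3 (p+1) c hdc ⟨-a', by rw [map_neg, hda', neg_neg]⟩
    have hcl : dK' (p+1) (a' + f (p+1) e) = 0 := by
      rw [map_add, ← fd, ← he, hda', neg_add_cancel]
    obtain ⟨b, hbd, r', hr'⟩ := hf4 p (a' + f (p+1) e) hcl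
    refine ⟨mt - ι (p+1) e + ι (p+1) b, ?_, vt + ι' p r', ?_⟩
    · rw [map_add, map_sub, ← ιd, ← ιd, hbd, map_zero, add_zero, ← he, ← hc, sub_self]
    · rw [map_add, map_sub, sq1, sq1, hr', map_add, map_add, ι'd, ha', map_add]
      abel

end Five
end StmtSix

/-- If `F : A → B` is a quasi-isomorphism of cdgas, `η ∈ A¹ ∩ ker d`, and
`m ≥ 1`, then the induced map `F ⊗ id : A(η, m) → B(F(η), m)` of thickened complexes is a
quasi-isomorphism. -/
theorem stmt_6 {k : Type} [Field k] [CharZero k] (B C : GCDA k) (φ : GCDAHom B C)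
    (η : B.A 1) (hη : B.d 1 η = 0) (m : ℕ) (hm : 1 ≤ m)
    (hq : IsQIso B.A C.A B.d C.d φ.F) :
    IsQIso (fun p => Fin m → B.A p) (fun p => Fin m → C.A p)
      (B.thickD η m) (C.thickD (φ.F 1 η) m)
      (fun p ω j => φ.F p (ω j)) := by
  clear hm
  have hη' : C.d 1 (φ.F 1 η) = 0 := by rw [← φ.F_d, hη, StmtSix.F_zero]
  induction m with
  | zero =>
    exact ⟨fun x _ _ => funext fun j => j.elim0,
      fun y _ => ⟨0, funext fun j => j.elim0, funext fun j => j.elim0⟩,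
      fun p x _ _ => ⟨0, funext fun j => j.elim0⟩,
      fun p y _ => ⟨0, funext fun j => j.elim0, 0, funext fun j => j.elim0⟩⟩
  | succ m ih =>
    -- bundled maps
    have main := StmtSix.five_lemma
      (K := B.A) (M := fun p => Fin (m+1) → B.A p) (Q := fun p => Fin m → B.A p)
      (K' := C.A) (M' := fun p => Fin (m+1) → C.A p) (Q' := fun p => Fin m → C.A p)
      (fun p => AddMonoidHom.mk' (B.d p) (B.d_add p))
      (fun p => AddMonoidHom.mk' (B.thickD η (m+1) p) (StmtSix.thickD_add B η (m+1) p))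
      (fun p => AddMonoidHom.mk' (B.thickD η m p) (StmtSix.thickD_add B η m p))
      (fun p => AddMonoidHom.mk' (C.d p) (C.d_add p))
      (fun p => AddMonoidHom.mk' (C.thickD (φ.F 1 η) (m+1) p) (StmtSix.thickD_add C (φ.F 1 η) (m+1) p))
      (fun p => AddMonoidHom.mk' (C.thickD (φ.F 1 η) m p) (StmtSix.thickD_add C (φ.F 1 η) m p))
      (fun p => AddMonoidHom.mk' (fun (a : B.A p) (j : Fin (m+1)) => if (j : ℕ) = m then a else 0)
        (by intro x y; funext j; dsimp only [Pi.add_apply]; split_ifs <;> simp))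
      (fun p => AddMonoidHom.mk'
        (fun (x : Fin (m+1) → B.A p) (j : Fin m) => x ⟨(j : ℕ), by omega⟩)
        (by intro x y; rfl))
      (fun p => AddMonoidHom.mk' (fun (a : C.A p) (j : Fin (m+1)) => if (j : ℕ) = m then a else 0)
        (by intro x y; funext j; dsimp only [Pi.add_apply]; split_ifs <;> simp))
      (fun p => AddMonoidHom.mk'
        (fun (x : Fin (m+1) → C.A p) (j : Fin m) => x ⟨(j : ℕ), by omega⟩)
        (by intro x y; rfl))
      (fun p => AddMonoidHom.mk' (φ.F p) (φ.F_add p))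
      (fun p => AddMonoidHom.mk' (fun (ω : Fin (m+1) → B.A p) (j : Fin (m+1)) => φ.F p (ω j))
        (by intro x y; funext j; exact φ.F_add p (x j) (y j)))
      (fun p => AddMonoidHom.mk' (fun (ω : Fin m → B.A p) (j : Fin m) => φ.F p (ω j))
        (by intro x y; funext j; exact φ.F_add p (x j) (y j)))
      (fun p x => StmtSix.thickD_thickD B η hη (m+1) p x)
      (fun p x => StmtSix.thickD_thickD C (φ.F 1 η) hη' (m+1) p x)
      ?ιd ?πd ?ι'd ?π'd
      (fun p a => φ.F_d p a)
      (fun p x => StmtSix.F_thickD B φ η (m+1) p x)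
      ?sq1 (fun p x => rfl)
      ?ιinj ?πsurj ?hexact ?ι'inj ?π'ι' ?π'surj ?hexact'
      hq ih
    · exact main
    case ιd =>
      intro p a
      funext j
      simp only [AddMonoidHom.mk'_apply, GCDA.thickD]
      have hlt := j.isLt
      by_cases h0 : (j : ℕ) = 0
      · rw [dif_pos h0]
        by_cases hm0 : (j : ℕ) = m
        · rw [if_pos hm0, if_pos hm0, add_zero]
        · rw [if_neg hm0, if_neg hm0, StmtSix.d_zero, add_zero]
      · rw [dif_neg h0]
        have hne : ¬ ((j : ℕ) - 1 = m) := by omega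
        rw [if_neg hne, StmtSix.etaMul_zero, add_zero]
        by_cases hm0 : (j : ℕ) = m
        · rw [if_pos hm0, if_pos hm0]
        · rw [if_neg hm0, if_neg hm0, StmtSix.d_zero]
    case πd => intro p x; rfl
    case ι'd =>
      intro p a
      funext j
      simp only [AddMonoidHom.mk'_apply, GCDA.thickD]
      have hlt := j.isLt
      by_cases h0 : (j : ℕ) = 0
      · rw [dif_pos h0]
        by_cases hm0 : (j : ℕ) = m
        · rw [if_pos hm0, if_pos hm0, add_zero]
        · rw [if_neg hm0, if_neg hm0, StmtSix.d_zero, add_zero]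
      · rw [dif_neg h0]
        have hne : ¬ ((j : ℕ) - 1 = m) := by omega
        rw [if_neg hne, StmtSix.etaMul_zero, add_zero]
        by_cases hm0 : (j : ℕ) = m
        · rw [if_pos hm0, if_pos hm0]
        · rw [if_neg hm0, if_neg hm0, StmtSix.d_zero]
    case π'd => intro p x; rfl
    case sq1 =>
      intro p a
      funext j
      simp only [AddMonoidHom.mk'_apply]
      split_ifs with hm0
      · rfl
      · exact StmtSix.F_zero φ p
    case ιinj =>
      intro p a ha
      have := congrFun ha (Fin.last m)
      simpa using this
    case πsurj =>
      intro p y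
      refine ⟨fun j => if h : (j : ℕ) < m then y ⟨(j : ℕ), h⟩ else 0, funext fun j => ?_⟩
      exact dif_pos j.isLt
    case hexact =>
      intro p x hx
      refine ⟨x (Fin.last m), funext fun j => ?_⟩
      by_cases hm0 : (j : ℕ) = m
      · have hj : j = Fin.last m := Fin.ext (by simpa using hm0)
        show (if (j : ℕ) = m then x (Fin.last m) else 0) = x j
        rw [if_pos hm0, hj]
      · show (if (j : ℕ) = m then x (Fin.last m) else 0) = x j
        rw [if_neg hm0]
        have hj : (j : ℕ) < m := by have := j.isLt; omega
        exact (congrFun hx (⟨(j : ℕ), hj⟩ : Fin m)).symm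
    case ι'inj =>
      intro p a ha
      have := congrFun ha (Fin.last m)
      simpa using this
    case π'ι' =>
      intro p a
      funext j
      simp only [AddMonoidHom.mk'_apply]
      have hne : ¬ ((j : ℕ) = m) := by have := j.isLt; omega
      simp [hne]
    case π'surj =>
      intro p y
      refine ⟨fun j => if h : (j : ℕ) < m then y ⟨(j : ℕ), h⟩ else 0, funext fun j => ?_⟩
      exact dif_pos j.isLt
    case hexact' =>
      intro p x hx
      refine ⟨x (Fin.last m), funext fun j => ?_⟩
      by_cases hm0 : (j : ℕ) = m
      · have hj : j = Fin.last m := Fin.ext (by simpa using hm0)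
        show (if (j : ℕ) = m then x (Fin.last m) else 0) = x j
        rw [if_pos hm0, hj]
      · show (if (j : ℕ) = m then x (Fin.last m) else 0) = x j
        rw [if_neg hm0]
        have hj : (j : ℕ) < m := by have := j.isLt; omega
        exact (congrFun hx (⟨(j : ℕ), hj⟩ : Fin m)).symm
end

section
/- Let R_∞ = k[[s]] and let C• be a cochain complex of torsion-free R_∞-modules. Suppose m ≥ 1 is such that s^m annihilates the R_∞-torsion of every cohomology module H*(C•). For i ≥ 1, j ≥ 0 let ψᵢⱼ: C• ⊗_{R_∞} R_i → C• ⊗_{R_∞} R_{i+j} be induced by the injection R_i → R_{i+j} sending 1 to s^j, where R_n = k[[s]]/(s^n). Then for all i, j ≥ m, the natural map C• → C• ⊗ R_i induces an isomorphism Tors_{R_∞} H*(C•) ≅ ker( ψᵢⱼ*: H*(C• ⊗ R_i) → H*(C• ⊗ R_{i+j}) ). -/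
/-- Let `R_∞ = k[[s]]` and `C•` a cochain complex of torsion-free
`R_∞`-modules such that `sᵐ` annihilates the torsion of every cohomology module.  Identifying
`C• ⊗ R_i` with `C•/sⁱC•`, and letting `ψᵢⱼ : C•/sⁱ → C•/s^{i+j}` be induced by
multiplication by `sʲ`, for all `i, j ≥ m` the natural map `C• → C•/sⁱ` induces an
isomorphism `Tors H*(C•) ≅ ker ψᵢⱼ*`.  This is expressed elementwise: (a) torsion
cohomology classes land in `ker ψᵢⱼ*`, (b) the induced map is injective, and (c) every class
of `ker ψᵢⱼ*` comes from a torsion class of `H*(C•)`. -/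
theorem stmt_7 (k : Type) [Field k]
    (C : ℤ → Type) [∀ n, AddCommGroup (C n)] [∀ n, Module (PowerSeries k) (C n)]
    [∀ n, NoZeroSMulDivisors (PowerSeries k) (C n)]
    (d : ∀ n : ℤ, C n →ₗ[PowerSeries k] C (n + 1))
    (hdd : ∀ (n : ℤ) (x : C n), d (n + 1) (d n x) = 0)
    (m : ℕ) (hm : 1 ≤ m)
    (hann : ∀ (n : ℤ) (z : C (n + 1)), d (n + 1) z = 0 →
      (∃ r : PowerSeries k, r ≠ 0 ∧ ∃ w : C n, r • z = d n w) →
      ∃ w : C n, (PowerSeries.X : PowerSeries k) ^ m • z = d n w)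
    (i j : ℕ) (hi : m ≤ i) (hj : m ≤ j) (n : ℤ) :
    -- (a) a torsion cohomology class of `C` maps to the kernel of `ψᵢⱼ*`
    (∀ z : C (n + 1), d (n + 1) z = 0 →
      (∃ r : PowerSeries k, r ≠ 0 ∧ ∃ w : C n, r • z = d n w) →
      ∃ w : C n, ∃ u : C (n + 1),
        (PowerSeries.X : PowerSeries k) ^ j • z
          = d n w + (PowerSeries.X : PowerSeries k) ^ (i + j) • u) ∧
    -- (b) injectivity: a torsion cocycle which is a coboundary mod `sⁱ` is a coboundary
    (∀ z : C (n + 1), d (n + 1) z = 0 →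
      (∃ r : PowerSeries k, r ≠ 0 ∧ ∃ w : C n, r • z = d n w) →
      (∃ w : C n, ∃ u : C (n + 1),
        z = d n w + (PowerSeries.X : PowerSeries k) ^ i • u) →
      ∃ w : C n, z = d n w) ∧
    -- (c) surjectivity: a class of `H*(C/sⁱ)` killed by `ψᵢⱼ*` comes from a torsion class
    (∀ x : C (n + 1),
      (∃ v : C (n + 1 + 1), d (n + 1) x = (PowerSeries.X : PowerSeries k) ^ i • v) →
      (∃ w : C n, ∃ u : C (n + 1),
        (PowerSeries.X : PowerSeries k) ^ j • x
          = d n w + (PowerSeries.X : PowerSeries k) ^ (i + j) • u) →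
      ∃ z : C (n + 1), d (n + 1) z = 0 ∧
        (∃ r : PowerSeries k, r ≠ 0 ∧ ∃ w : C n, r • z = d n w) ∧
        ∃ w : C n, ∃ u : C (n + 1),
          x = z + d n w + (PowerSeries.X : PowerSeries k) ^ i • u) := by
  have hs : ∀ a : ℕ, ((PowerSeries.X : PowerSeries k) ^ a) ≠ 0 := fun a =>
    pow_ne_zero a PowerSeries.X_ne_zero
  refine ⟨?_, ?_, ?_⟩
  · intro z hz htor
    obtain ⟨w0, hw0⟩ := hann n z hz htor
    obtain ⟨a, rfl⟩ := Nat.exists_eq_add_of_le hj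
    refine ⟨(PowerSeries.X : PowerSeries k) ^ a • w0, 0, ?_⟩
    rw [smul_zero, add_zero, map_smul, ← hw0, pow_add, mul_comm, mul_smul]
  · rintro z hz htor ⟨w, u, hwu⟩
    obtain ⟨w0, hw0⟩ := hann n z hz htor
    have hdu : d (n+1) u = 0 := by
      have h1 : (0 : C (n+1+1))
          = d (n+1) (d n w) + (PowerSeries.X : PowerSeries k) ^ i • d (n+1) u := by
        rw [← map_smul, ← map_add, ← hwu, hz]
      rw [hdd, zero_add] at h1
      rcases smul_eq_zero.mp h1.symm with h | h
      · exact absurd h (hs i)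
      · exact h
    have hut : ∃ r : PowerSeries k, r ≠ 0 ∧ ∃ w' : C n, r • u = d n w' := by
      refine ⟨(PowerSeries.X : PowerSeries k) ^ (m + i), hs _,
        w0 - (PowerSeries.X : PowerSeries k) ^ m • w, ?_⟩
      have h2 : (PowerSeries.X : PowerSeries k) ^ m • z
          = (PowerSeries.X : PowerSeries k) ^ m • d n w
            + (PowerSeries.X : PowerSeries k) ^ (m + i) • u := by
        rw [hwu, smul_add, smul_smul, ← pow_add]
      rw [map_sub, map_smul, ← hw0, h2]
      abel
    obtain ⟨w1, hw1⟩ := hann n u hdu hut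
    obtain ⟨b, rfl⟩ := Nat.exists_eq_add_of_le hi
    refine ⟨w + (PowerSeries.X : PowerSeries k) ^ b • w1, ?_⟩
    rw [map_add, map_smul, ← hw1, hwu, pow_add, mul_comm, mul_smul]
  · rintro x ⟨v, hv⟩ ⟨w, u, hwu⟩
    refine ⟨x - (PowerSeries.X : PowerSeries k) ^ i • u, ?_, ?_, 0, u, ?_⟩
    · have h1 : (PowerSeries.X : PowerSeries k) ^ j
          • d (n+1) (x - (PowerSeries.X : PowerSeries k) ^ i • u) = 0 := by
        rw [← map_smul, smul_sub, smul_smul, ← pow_add, add_comm j i, hwu]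
        have : d n w + (PowerSeries.X : PowerSeries k) ^ (i + j) • u
            - (PowerSeries.X : PowerSeries k) ^ (i + j) • u = d n w := by abel
        rw [this, hdd]
      rcases smul_eq_zero.mp h1 with h | h
      · exact absurd h (hs j)
      · exact h
    · refine ⟨(PowerSeries.X : PowerSeries k) ^ j, hs j, w, ?_⟩
      rw [smul_sub, smul_smul, ← pow_add, add_comm j i, hwu]
      abel
    · rw [map_zero]
      abel
end

section
/- Let R_∞ = k[[s]] and let C• be a cochain complex of torsion-free R_∞-modules such that s^m annihilates Tors_{R_∞} H*(C•). For j ≥ 0, i ≥ 1 let φⱼᵢ: C• ⊗_{R_∞} R_{i+j} → C• ⊗_{R_∞} R_i be induced by the projection R_{i+j} → R_i. Then for all j ≥ m and all i ≥ 1, the natural map C• → C• ⊗ R_i induces an isomorphism H*(C•) ⊗_{R_∞} R_i ≅ image( φⱼᵢ*: H*(C• ⊗ R_{i+j}) → H*(C• ⊗ R_i) ). -/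
/-- Let `R_∞ = k[[s]]` and `C•` a cochain complex of torsion-free
`R_∞`-modules such that `sᵐ` annihilates `Tors H*(C•)`.  Identifying `C• ⊗ R_n` with
`C•/sⁿC•`, and letting `φⱼᵢ : C•/s^{i+j} → C•/sⁱ` be the projection, for all `j ≥ m` and
`i ≥ 1` the natural map `C• → C•/sⁱ` induces an isomorphism
`H*(C•) ⊗ R_i ≅ image φⱼᵢ*`, expressed elementwise: (a) every cohomology class of `C` maps
into the image of `φⱼᵢ*`, (b) the induced map `H*(C)/sⁱH*(C) → H*(C/sⁱ)` is injective, and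
(c) the image of `φⱼᵢ*` consists of classes coming from `H*(C)`. -/
theorem stmt_8 (k : Type) [Field k]
    (C : ℤ → Type) [∀ n, AddCommGroup (C n)] [∀ n, Module (PowerSeries k) (C n)]
    [∀ n, NoZeroSMulDivisors (PowerSeries k) (C n)]
    (d : ∀ n : ℤ, C n →ₗ[PowerSeries k] C (n + 1))
    (hdd : ∀ (n : ℤ) (x : C n), d (n + 1) (d n x) = 0)
    (m : ℕ) (hm : 1 ≤ m)
    (hann : ∀ (n : ℤ) (z : C (n + 1)), d (n + 1) z = 0 →
      (∃ r : PowerSeries k, r ≠ 0 ∧ ∃ w : C n, r • z = d n w) →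
      ∃ w : C n, (PowerSeries.X : PowerSeries k) ^ m • z = d n w)
    (i j : ℕ) (hi : 1 ≤ i) (hj : m ≤ j) (n : ℤ) :
    -- (a) every cohomology class of `C` lies in the image of `φⱼᵢ*`
    (∀ z : C (n + 1), d (n + 1) z = 0 →
      ∃ x : C (n + 1),
        (∃ v : C (n + 1 + 1), d (n + 1) x = (PowerSeries.X : PowerSeries k) ^ (i + j) • v) ∧
        ∃ w : C n, ∃ u : C (n + 1),
          z = x + d n w + (PowerSeries.X : PowerSeries k) ^ i • u) ∧
    -- (b) injectivity of `H*(C) ⊗ R_i → H*(C/sⁱ)`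
    (∀ z : C (n + 1), d (n + 1) z = 0 →
      (∃ w : C n, ∃ u : C (n + 1),
        z = d n w + (PowerSeries.X : PowerSeries k) ^ i • u) →
      ∃ z' : C (n + 1), d (n + 1) z' = 0 ∧
        ∃ w : C n, z = (PowerSeries.X : PowerSeries k) ^ i • z' + d n w) ∧
    -- (c) the image of `φⱼᵢ*` consists of classes coming from `H*(C)`
    (∀ x : C (n + 1),
      (∃ v : C (n + 1 + 1), d (n + 1) x = (PowerSeries.X : PowerSeries k) ^ (i + j) • v) →
      ∃ z : C (n + 1), d (n + 1) z = 0 ∧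
        ∃ w : C n, ∃ u : C (n + 1),
          x = z + d n w + (PowerSeries.X : PowerSeries k) ^ i • u) := by
  constructor
  · -- (a)
    intro z hz
    exact ⟨z, ⟨0, by simp [hz]⟩, 0, 0, by simp⟩
  constructor
  · -- (b)
    rintro z hz ⟨w, u, rfl⟩
    have h0 : (PowerSeries.X : PowerSeries k) ^ i • d (n + 1) u = 0 := by
      have := hdd n w
      calc (PowerSeries.X : PowerSeries k) ^ i • d (n + 1) u
          = d (n + 1) (d n w + (PowerSeries.X : PowerSeries k) ^ i • u) := by
            simp [map_add, map_smul, this]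
        _ = 0 := hz
    have hXi : (PowerSeries.X : PowerSeries k) ^ i ≠ 0 :=
      pow_ne_zero _ PowerSeries.X_ne_zero
    have hdu : d (n + 1) u = 0 := by
      rcases smul_eq_zero.mp h0 with h | h
      · exact absurd h hXi
      · exact h
    exact ⟨u, hdu, w, by abel⟩
  · -- (c)
    rintro x ⟨v, hv⟩
    have hXij : (PowerSeries.X : PowerSeries k) ^ (i + j) ≠ 0 :=
      pow_ne_zero _ PowerSeries.X_ne_zero
    have hdv : d (n + 1 + 1) v = 0 := by
      have h0 : (PowerSeries.X : PowerSeries k) ^ (i + j) • d (n + 1 + 1) v = 0 := by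
        rw [← map_smul, ← hv]; exact hdd (n + 1) x
      rcases smul_eq_zero.mp h0 with h | h
      · exact absurd h hXij
      · exact h
    obtain ⟨w₁, hw₁⟩ := hann (n + 1) v hdv ⟨(PowerSeries.X : PowerSeries k) ^ (i + j),
      hXij, x, hv.symm⟩
    refine ⟨x - (PowerSeries.X : PowerSeries k) ^ (i + j - m) • w₁, ?_, 0,
      (PowerSeries.X : PowerSeries k) ^ (j - m) • w₁, ?_⟩
    · have hij : (PowerSeries.X : PowerSeries k) ^ (i + j)
          = (PowerSeries.X : PowerSeries k) ^ (i + j - m) * (PowerSeries.X : PowerSeries k) ^ m := by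
        rw [← pow_add]
        congr 1
        omega
      rw [map_sub, map_smul, hv, ← hw₁, hij, mul_smul, sub_self]
    · have hij : (PowerSeries.X : PowerSeries k) ^ i • (PowerSeries.X : PowerSeries k) ^ (j - m) • w₁
          = (PowerSeries.X : PowerSeries k) ^ (i + j - m) • w₁ := by
        rw [← mul_smul, ← pow_add]
        congr 2
        omega
      rw [hij]
      simp
end

section
/- Let V be a finite-dimensional vector space over a field, equipped with an increasing filtration W• that is finite and exhaustive (W_a = 0 for a ≪ 0 and W_b = V for b ≫ 0). Let θ: V → V be a linear map satisfying both strictness conditions: θ(W_k V) = W_k V ∩ θ(V) for all k, and θ(W_{k+2} V) = W_k V ∩ θ(V) for all k. Then θ = 0. -/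
/-- Let `V` be a finite-dimensional vector space with a finite exhaustive
increasing filtration `W`, and let `θ : V → V` be a linear map satisfying both strictness
conditions `θ(W_k) = W_k ∩ im θ` and `θ(W_{k+2}) = W_k ∩ im θ` for all `k`. Then `θ = 0`. -/
theorem stmt_14 (K V : Type) [Field K] [AddCommGroup V] [Module K V] [FiniteDimensional K V]
    (W : ℤ → Submodule K V) (hmono : Monotone W)
    (a b : ℤ) (ha : W a = ⊥) (hb : W b = ⊤)
    (θ : V →ₗ[K] V)
    (h1 : ∀ n : ℤ, Submodule.map θ (W n) = W n ⊓ LinearMap.range θ)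
    (h2 : ∀ n : ℤ, Submodule.map θ (W (n + 2)) = W n ⊓ LinearMap.range θ) :
    θ = 0 := by
  set R := LinearMap.range θ with hR
  have step : ∀ n : ℤ, W n ⊓ R = W (n + 2) ⊓ R := by
    intro n
    rw [← h2 n, ← h1 (n + 2)]
  have key : ∀ k : ℕ, W (b - 2 * k) ⊓ R = R := by
    intro k
    induction k with
    | zero => simp [hb]
    | succ k ih =>
      have e : b - 2 * (k + 1 : ℕ) + 2 = b - 2 * k := by push_cast; ring
      rw [step (b - 2 * (k + 1 : ℕ)), e, ih]
  have hk : b - 2 * ((b - a).toNat : ℤ) ≤ a := by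
    rcases le_or_gt a b with h | h
    · have : ((b - a).toNat : ℤ) = b - a := Int.toNat_of_nonneg (by omega)
      omega
    · have : ((b - a).toNat : ℤ) = 0 := by
        simp [Int.toNat_of_nonpos (by omega : b - a ≤ 0)]
      omega
  have : R ≤ ⊥ := by
    rw [← key (b - a).toNat] at *
    calc W (b - 2 * (b - a).toNat) ⊓ R ≤ W (b - 2 * (b - a).toNat) := inf_le_left
      _ ≤ W a := hmono hk
      _ = ⊥ := ha
  have hR0 : R = ⊥ := le_bot_iff.mp this
  ext v
  have : θ v ∈ R := ⟨v, rfl⟩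
  rw [hR0] at this
  simpa using this
end

section
/- Let (A, d, ∧) be a cdga with an increasing cdga-filtration W•, m ≥ 1, and let η₁, η₂ ∈ W₁A¹ ∩ ker d with η₁ − η₂ = da for some a ∈ W₁A⁰. Then the isomorphism exp(a ⊗ s) ∧ −: A(η₁, m) → A(η₂, m) is filtered with respect to W (where Wᵢ A(η,m) = ⊕_{j=0}^{m−1} W_{i+2j}A ⊗ k⟨s^j⟩), and the induced map on each associated graded piece Grᵢ^W is the identity. -/
variable {k : Type} [Field k]

/-- Let `W` be an increasing cdga-filtration of `A`, let
`η₁, η₂ ∈ W₁A¹ ∩ ker d` be cohomologous in `W₁`, say `η₁ − η₂ = da` with `a ∈ W₁A⁰`.  Then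
the isomorphism `exp(a ⊗ s) ∧ − : A(η₁, m) → A(η₂, m)` is filtered with respect to the
thickened filtration `Wᵢ = ⊕_j W_{i+2j}A ⊗ ⟨sʲ⟩`, and it induces the identity on each
`W`-graded piece, i.e. `exp(a ⊗ s) ∧ ω − ω ∈ W_{i−1}` for `ω ∈ Wᵢ`. -/
theorem stmt_17 {k : Type} [Field k] [CharZero k] (B : GCDA k)
    (W : ℤ → ∀ p : ℕ, Submodule k (B.A p))
    (Wmono : ∀ i i' : ℤ, i ≤ i' → ∀ p, W i p ≤ W i' p)
    (Wd : ∀ (i : ℤ) (p : ℕ) (x : B.A p), x ∈ W i p → B.d p x ∈ W i (p + 1))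
    (Wmul : ∀ (i i' : ℤ) (p q : ℕ) (x : B.A p) (y : B.A q),
      x ∈ W i p → y ∈ W i' q → B.mul p q x y ∈ W (i + i') (p + q))
    (η₁ η₂ : B.A 1) (h₁ : B.d 1 η₁ = 0) (h₂ : B.d 1 η₂ = 0)
    (hη₁W : η₁ ∈ W 1 1) (hη₂W : η₂ ∈ W 1 1)
    (a : B.A 0) (ha : B.d 0 a = η₁ - η₂) (haW : a ∈ W 1 0)
    (m : ℕ) (hm : 1 ≤ m) (i : ℤ) (p : ℕ) (ω : Fin m → B.A p)
    (hω : ∀ j : Fin m, ω j ∈ W (i + 2 * ((j : ℕ) : ℤ)) p) :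
    (∀ j : Fin m, B.expWedge a m p ω j ∈ W (i + 2 * ((j : ℕ) : ℤ)) p) ∧
    (∀ j : Fin m, B.expWedge a m p ω j - ω j ∈ W (i - 1 + 2 * ((j : ℕ) : ℤ)) p) := by
  -- cast preserves filtration membership
  have castmem : ∀ {p' q : ℕ} (h : p' = q) (n : ℤ) (x : B.A p'),
      x ∈ W n p' → cast (congrArg B.A h) x ∈ W n q := by
    intro p' q h n x hx; subst h; exact hx
  -- powers of `a` lie in the expected filtration step
  have pow_mem : ∀ n : ℕ, B.pow0 a (n + 1) ∈ W ((n : ℤ) + 1) 0 := by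
    intro n
    induction n with
    | zero => simpa [GCDA.pow0, B.mul_one] using haW
    | succ n ih =>
      have h := Wmul 1 ((n : ℤ) + 1) 0 0 a (B.pow0 a (n + 1)) haW ih
      have he : (1 + ((n : ℤ) + 1)) = (((n + 1 : ℕ)) : ℤ) + 1 := by push_cast; ring
      rw [he] at h
      exact h
  have exp_mem : ∀ n : ℕ, B.expCoef a (n + 1) ∈ W ((n : ℤ) + 1) 0 := fun n =>
    Submodule.smul_mem _ _ (pow_mem n)
  have key : ∀ j : Fin m,
      B.expWedge a m p ω j - ω j ∈ W (i - 1 + 2 * ((j : ℕ) : ℤ)) p := by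
    intro j
    set f : ℕ → B.A p := fun n =>
      cast (congrArg B.A (Nat.zero_add p))
        (B.mul 0 p (B.expCoef a n)
          (ω ⟨(j : ℕ) - n, lt_of_le_of_lt (Nat.sub_le _ _) j.isLt⟩)) with hf
    have hsplit : B.expWedge a m p ω j
        = (∑ n ∈ Finset.range (j : ℕ), f (n + 1)) + f 0 := by
      rw [show B.expWedge a m p ω j = ∑ n ∈ Finset.range ((j : ℕ) + 1), f n from rfl]
      exact Finset.sum_range_succ' f (j : ℕ)
    have hf0 : f 0 = ω j := by
      have hcoef : B.expCoef a 0 = B.one := by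
        simp [GCDA.expCoef, GCDA.pow0, Nat.factorial]
      have hidx : (⟨(j : ℕ) - 0, lt_of_le_of_lt (Nat.sub_le _ _) j.isLt⟩ : Fin m) = j := by
        ext; simp
      rw [hf]
      simp only [hcoef, hidx, B.one_mul, cast_cast, cast_eq]
    have hterm : ∀ n ∈ Finset.range (j : ℕ),
        f (n + 1) ∈ W (i - 1 + 2 * ((j : ℕ) : ℤ)) p := by
      intro n hn
      rw [Finset.mem_range] at hn
      have hle : n + 1 ≤ (j : ℕ) := hn
      have hωmem := hω ⟨(j : ℕ) - (n + 1), lt_of_le_of_lt (Nat.sub_le _ _) j.isLt⟩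
      have hmul := Wmul ((n : ℤ) + 1) (i + 2 * (((j : ℕ) - (n + 1) : ℕ) : ℤ)) 0 p
        (B.expCoef a (n + 1)) _ (exp_mem n) hωmem
      have hcast := castmem (Nat.zero_add p) _ _ hmul
      refine Wmono _ _ ?_ p hcast
      have : (((j : ℕ) - (n + 1) : ℕ) : ℤ) = ((j : ℕ) : ℤ) - (n : ℤ) - 1 := by
        omega
      rw [this]; omega
    have hsum : (∑ n ∈ Finset.range (j : ℕ), f (n + 1))
        ∈ W (i - 1 + 2 * ((j : ℕ) : ℤ)) p :=
      Submodule.sum_mem _ hterm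
    rw [hsplit, hf0]
    simpa using hsum
  refine ⟨fun j => ?_, key⟩
  have h1 : B.expWedge a m p ω j - ω j ∈ W (i + 2 * ((j : ℕ) : ℤ)) p :=
    Wmono _ _ (by omega) p (key j)
  have := Submodule.add_mem _ h1 (hω j)
  simpa using this
end
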